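/- Let R be a ring and N a left R-module such that N ⊕ N embeds purely into N. Then for all positive primitive formulas φ, ψ in one free variable with ψ → φ valid in all R-modules, the index of ψ(N) in φ(N) is either 1 or infinite. -/

import Mathlib

universe u v

/-- A positive primitive formula in one free variable over the ring `R`:
`φ(x) = ∃ y₁ … y_k, ⋀_{i<m} (a i • x + ∑ j, b i j • y j = 0)`. -/
structure PPFormula (R : Type u) where
  m : ℕ
  k : ℕ
  a : Fin m → R
  b : Fin m → Fin k → R

/-- The solution set of a pp-formula in a module, a subgroup of the module. -/
def PPFormula.sol {R : Type u} [Ring R] (φ : PPFormula R)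
    (N : Type v) [AddCommGroup N] [Module R N] : AddSubgroup N where
  carrier := {x | ∃ y : Fin φ.k → N, ∀ i, φ.a i • x + ∑ j, φ.b i j • y j = 0}
  zero_mem' := ⟨0, fun i => by simp⟩
  add_mem' := by
    rintro x₁ x₂ ⟨y, hy⟩ ⟨z, hz⟩
    refine ⟨fun j => y j + z j, fun i => ?_⟩
    have h : φ.a i • (x₁ + x₂) + ∑ j, φ.b i j • (y j + z j)
        = (φ.a i • x₁ + ∑ j, φ.b i j • y j) + (φ.a i • x₂ + ∑ j, φ.b i j • z j) := by
      simp only [smul_add, Finset.sum_add_distrib]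
      abel
    rw [h, hy i, hz i, add_zero]
  neg_mem' := by
    rintro x ⟨y, hy⟩
    refine ⟨fun j => -y j, fun i => ?_⟩
    have h : φ.a i • (-x) + ∑ j, φ.b i j • (-y j)
        = -(φ.a i • x + ∑ j, φ.b i j • y j) := by
      simp only [smul_neg, Finset.sum_neg_distrib]
      abel
    rw [h, hy i, neg_zero]

def IsPureMap (R : Type u) [Ring R] {M N : Type v}
    [AddCommGroup M] [Module R M] [AddCommGroup N] [Module R N]
    (f : M →ₗ[R] N) : Prop :=
  ∀ (m k : ℕ) (a : Fin m → Fin k → R) (b : Fin m → M),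
    (∃ x : Fin k → N, ∀ i, ∑ j, a i j • x j = f (b i)) →
    (∃ x : Fin k → M, ∀ i, ∑ j, a i j • x j = b i)

/-- Membership in the solution set in a product module is componentwise. -/
lemma PPFormula.mem_sol_prod {R : Type u} [Ring R] (φ : PPFormula R)
    {N : Type v} [AddCommGroup N] [Module R N] (x : N × N) :
    x ∈ φ.sol (N × N) ↔ x.1 ∈ φ.sol N ∧ x.2 ∈ φ.sol N := by
  constructor
  · rintro ⟨y, hy⟩
    constructor
    · refine ⟨fun j => (y j).1, fun i => ?_⟩
      have := congrArg Prod.fst (hy i)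
      simpa [Prod.fst_sum] using this
    · refine ⟨fun j => (y j).2, fun i => ?_⟩
      have := congrArg Prod.snd (hy i)
      simpa [Prod.snd_sum] using this
  · rintro ⟨⟨y₁, hy₁⟩, ⟨y₂, hy₂⟩⟩
    refine ⟨fun j => (y₁ j, y₂ j), fun i => ?_⟩
    have : (φ.a i • x + ∑ j, φ.b i j • (y₁ j, y₂ j) : N × N)
        = (φ.a i • x.1 + ∑ j, φ.b i j • y₁ j, φ.a i • x.2 + ∑ j, φ.b i j • y₂ j) := by
      ext <;> simp [Prod.fst_sum, Prod.snd_sum]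
    rw [this, hy₁ i, hy₂ i]
    rfl

/-- A linear map sends solutions to solutions. -/
lemma PPFormula.map_mem_sol {R : Type u} [Ring R] (φ : PPFormula R)
    {M N : Type v} [AddCommGroup M] [Module R M] [AddCommGroup N] [Module R N]
    (f : M →ₗ[R] N) {x : M} (hx : x ∈ φ.sol M) : f x ∈ φ.sol N := by
  obtain ⟨y, hy⟩ := hx
  refine ⟨fun j => f (y j), fun i => ?_⟩
  have : φ.a i • f x + ∑ j, φ.b i j • f (y j)
      = f (φ.a i • x + ∑ j, φ.b i j • y j) := by
    simp [map_add, map_sum, map_smul]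
  rw [this, hy i, map_zero]

/-- Purity: pre-images of solutions are solutions. -/
lemma PPFormula.mem_sol_of_pure {R : Type u} [Ring R] (φ : PPFormula R)
    {M N : Type v} [AddCommGroup M] [Module R M] [AddCommGroup N] [Module R N]
    {f : M →ₗ[R] N} (hf : IsPureMap R f) {x : M} (hx : f x ∈ φ.sol N) :
    x ∈ φ.sol M := by
  obtain ⟨y, hy⟩ := hx
  obtain ⟨y', hy'⟩ := hf φ.m φ.k φ.b (fun i => -(φ.a i • x)) ⟨y, fun i => by
    rw [map_neg, map_smul]
    have := hy i
    linear_combination (norm := abel) this⟩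
  exact ⟨y', fun i => by rw [hy' i]; abel⟩

/-- If `N ⊕ N` embeds purely into `N`, then for all pp-formulas `φ, ψ` with `ψ → φ`
valid in all left `R`-modules, the index of `ψ(N)` in `φ(N)` is `1` or infinite
(infinite being recorded as `relindex = 0`). -/
theorem inv_one_or_infinite (R : Type u) [Ring R]
    (N : Type u) [AddCommGroup N] [Module R N]
    (hemb : ∃ f : (N × N) →ₗ[R] N, Function.Injective f ∧ IsPureMap R f)
    (φ ψ : PPFormula R)
    (himp : ∀ (L : Type u) [AddCommGroup L] [Module R L], ψ.sol L ≤ φ.sol L) :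
    (ψ.sol N).relIndex (φ.sol N) = 1 ∨ (ψ.sol N).relIndex (φ.sol N) = 0 := by
  obtain ⟨f, -, hpure⟩ := hemb
  by_contra hcon
  push_neg at hcon
  obtain ⟨h1, h0⟩ := hcon
  set H := (ψ.sol N).addSubgroupOf (φ.sol N) with hH
  set n := (ψ.sol N).relIndex (φ.sol N) with hn
  -- the quotient
  have hQcard : Nat.card (↥(φ.sol N) ⧸ H) = n := rfl
  have hQfin : Finite (↥(φ.sol N) ⧸ H) := by
    refine Nat.finite_of_card_ne_zero ?_
    rw [hQcard]; exact h0
  -- the homomorphism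
  have hmem : ∀ x : ↥(φ.sol N) × ↥(φ.sol N), f ((x.1 : N), (x.2 : N)) ∈ φ.sol N := by
    intro x
    exact φ.map_mem_sol f ((φ.mem_sol_prod _).2 ⟨x.1.2, x.2.2⟩)
  let G : (↥(φ.sol N) × ↥(φ.sol N)) →+ ↥(φ.sol N) :=
    { toFun := fun x => ⟨f ((x.1 : N), (x.2 : N)), hmem x⟩
      map_zero' := by ext; simp; exact map_zero f
      map_add' := by
        intro x y
        ext
        show f _ = f _ + f _
        rw [← map_add]
        rfl }
  let g : (↥(φ.sol N) × ↥(φ.sol N)) →+ (↥(φ.sol N) ⧸ H) :=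
    (QuotientAddGroup.mk' H).comp G
  have hker : g.ker = H.prod H := by
    ext x
    rw [AddMonoidHom.mem_ker, AddSubgroup.mem_prod]
    show (QuotientAddGroup.mk' H) (G x) = 0 ↔ _
    rw [QuotientAddGroup.mk'_apply, QuotientAddGroup.eq_zero_iff, hH,
      AddSubgroup.mem_addSubgroupOf, AddSubgroup.mem_addSubgroupOf,
      AddSubgroup.mem_addSubgroupOf]
    constructor
    · intro hx
      have hx' : f ((x.1 : N), (x.2 : N)) ∈ ψ.sol N := hx
      have h2 := ψ.mem_sol_of_pure hpure hx'
      rw [ψ.mem_sol_prod] at h2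
      exact ⟨h2.1, h2.2⟩
    · rintro ⟨hx1, hx2⟩
      show f ((x.1 : N), (x.2 : N)) ∈ ψ.sol N
      exact ψ.map_mem_sol f ((ψ.mem_sol_prod _).2 ⟨hx1, hx2⟩)
  -- injective map from the product quotient
  have hinj := QuotientAddGroup.kerLift_injective g
  have hle : Nat.card ((↥(φ.sol N) × ↥(φ.sol N)) ⧸ g.ker)
      ≤ Nat.card (↥(φ.sol N) ⧸ H) :=
    Nat.card_le_card_of_injective _ hinj
  have hcard : Nat.card ((↥(φ.sol N) × ↥(φ.sol N)) ⧸ g.ker) = n * n := by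
    rw [hker]
    show (H.prod H).index = n * n
    rw [AddSubgroup.index_prod]
    rfl
  rw [hcard, hQcard] at hle
  have hn1 : 1 ≤ n := Nat.one_le_iff_ne_zero.2 h0
  have hn2 : 2 ≤ n := by omega
  nlinarith
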